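/- If f : X → Y is a URL-map between length spaces and Y is a geodesic space, then f is a submetry: f(B(p,r)) = B(f(p),r) for every closed ball B(p,r) in X. -/
import Mathlib


open Set

/-- A length space: a metric space with at least two points in which any two points
are joined by paths of length arbitrarily close to the distance between them. -/
def IsLengthSpace (X : Type*) [MetricSpace X] : Prop :=
  (∃ x y : X, x ≠ y) ∧
  ∀ x y : X, ∀ ε : ℝ, 0 < ε → ∃ (c : ℝ → X) (b : ℝ), 0 ≤ b ∧
    ContinuousOn c (Icc 0 b) ∧ c 0 = x ∧ c b = y ∧
    eVariationOn c (Icc 0 b) < ENNReal.ofReal (dist x y + ε)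

/-- `c : [a,b] → X` is a rectifiable path: continuous with finite length. -/
def IsRectPath {X : Type*} [MetricSpace X] (c : ℝ → X) (a b : ℝ) : Prop :=
  a ≤ b ∧ ContinuousOn c (Icc a b) ∧ eVariationOn c (Icc a b) ≠ ⊤

/-- `cL` is a lift of the path `c : [a,b] → Y` through `f` starting at `q`. -/
def IsLift {X Y : Type*} [MetricSpace X] [MetricSpace Y] (f : X → Y) (c : ℝ → Y)
    (a b : ℝ) (q : X) (cL : ℝ → X) : Prop :=
  ContinuousOn cL (Icc a b) ∧ cL a = q ∧ ∀ t ∈ Icc a b, f (cL t) = c t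

/-- A URL-map (unique rectifiable lifting map): (I) `f` preserves lengths of
rectifiable paths; (II) every rectifiable path in `Y` lifts uniquely through `f`
starting at any prescribed point of the fiber over its initial point, and the lift
is rectifiable. -/
def IsURLMap {X Y : Type*} [MetricSpace X] [MetricSpace Y] (f : X → Y) : Prop :=
  (∀ (c : ℝ → X) (a b : ℝ), IsRectPath c a b →
    eVariationOn (f ∘ c) (Icc a b) = eVariationOn c (Icc a b)) ∧
  (∀ (c : ℝ → Y) (a b : ℝ), IsRectPath c a b → ∀ q : X, f q = c a →
    (∃ cL : ℝ → X, IsLift f c a b q cL ∧ eVariationOn cL (Icc a b) ≠ ⊤) ∧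
    (∀ cL cL' : ℝ → X, IsLift f c a b q cL → IsLift f c a b q cL' →
      EqOn cL cL' (Icc a b)))

/-- A geodesic space: a metric space with at least two points in which any two points
are joined by a geodesic, i.e. an arclength-parameterized curve whose length equals
the distance between its endpoints. -/
def IsGeodesicSpace (Y : Type*) [MetricSpace Y] : Prop :=
  (∃ x y : Y, x ≠ y) ∧
  ∀ x y : Y, ∃ γ : ℝ → Y, γ 0 = x ∧ γ (dist x y) = y ∧
    ∀ s ∈ Icc 0 (dist x y), ∀ t ∈ Icc 0 (dist x y), dist (γ s) (γ t) = |s - t|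

/-- If `f : X → Y` is a URL-map between length spaces and `Y` is a
geodesic space, then `f` is a submetry: `f(B(p,r)) = B(f(p),r)` for every closed
ball. -/
theorem urlMap_submetry {X Y : Type*} [MetricSpace X] [MetricSpace Y]
    (hX : IsLengthSpace X) (hY : IsLengthSpace Y) (hYg : IsGeodesicSpace Y)
    (f : X → Y) (hf : IsURLMap f) :
    ∀ (p : X) (r : ℝ), f '' Metric.closedBall p r = Metric.closedBall (f p) r := by
  intro p r
  -- f is 1-Lipschitz
  have hlip : ∀ x x' : X, dist (f x) (f x') ≤ dist x x' := by
    intro x x'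
    have key : ∀ ε : ℝ, 0 < ε → dist (f x) (f x') ≤ dist x x' + ε := by
      intro ε hε
      obtain ⟨c, b, hb, hc, hc0, hcb, hvar⟩ := hX.2 x x' ε hε
      have hrect : IsRectPath c 0 b := ⟨hb, hc, hvar.ne_top⟩
      have h1 := hf.1 c 0 b hrect
      have h2 : edist (f x) (f x') ≤ eVariationOn (f ∘ c) (Icc 0 b) := by
        have := eVariationOn.edist_le (f ∘ c) (x := 0) (y := b)
          (left_mem_Icc.mpr hb) (right_mem_Icc.mpr hb)
        simpa [Function.comp, hc0, hcb] using this
      have h3 : edist (f x) (f x') < ENNReal.ofReal (dist x x' + ε) := by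
        calc edist (f x) (f x') ≤ eVariationOn c (Icc 0 b) := h1 ▸ h2
          _ < _ := hvar
      rw [edist_dist] at h3
      have := (ENNReal.ofReal_lt_ofReal_iff_of_nonneg dist_nonneg).mp h3
      linarith
    by_contra h
    push_neg at h
    have := key ((dist (f x) (f x') - dist x x') / 2) (by linarith)
    linarith
  ext y
  simp only [mem_image, Metric.mem_closedBall]
  constructor
  · rintro ⟨x, hx, rfl⟩
    calc dist (f x) (f p) ≤ dist x p := hlip x p
      _ ≤ r := hx
  · intro hy
    set d := dist (f p) y with hd
    have hd0 : 0 ≤ d := dist_nonneg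
    obtain ⟨γ, hγ0, hγd, hγiso⟩ := hYg.2 (f p) y
    have hγlip : LipschitzOnWith 1 γ (Icc 0 d) := by
      intro s hs t ht
      rw [edist_dist, edist_dist, hγiso s hs t ht, Real.dist_eq]
      simp
    have hγvar : eVariationOn γ (Icc 0 d) ≤ ENNReal.ofReal d := by
      have h1 : eVariationOn γ (Icc 0 d) ≤ 1 * eVariationOn id (Icc 0 d) :=
        hγlip.comp_eVariationOn_le (mapsTo_id _)
      have h2 : eVariationOn (id : ℝ → ℝ) (Icc 0 d ∩ Icc 0 d) ≤ ENNReal.ofReal (d - 0) :=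
        MonotoneOn.eVariationOn_le (monotoneOn_id) (left_mem_Icc.mpr hd0)
          (right_mem_Icc.mpr hd0)
      rw [inter_self] at h2
      calc eVariationOn γ (Icc 0 d) ≤ 1 * eVariationOn id (Icc 0 d) := h1
        _ = eVariationOn id (Icc 0 d) := one_mul _
        _ ≤ ENNReal.ofReal (d - 0) := h2
        _ = ENNReal.ofReal d := by rw [sub_zero]
    have hγrect : IsRectPath γ 0 d :=
      ⟨hd0, hγlip.continuousOn, ne_top_of_le_ne_top ENNReal.ofReal_ne_top hγvar⟩
    obtain ⟨⟨cL, ⟨hcLcont, hcL0, hcLlift⟩, hcLfin⟩, -⟩ :=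
      hf.2 γ 0 d hγrect p (by rw [hγ0])
    have hcLrect : IsRectPath cL 0 d := ⟨hd0, hcLcont, hcLfin⟩
    have hfcL : eVariationOn (f ∘ cL) (Icc 0 d) = eVariationOn cL (Icc 0 d) :=
      hf.1 cL 0 d hcLrect
    have heq : eVariationOn (f ∘ cL) (Icc 0 d) = eVariationOn γ (Icc 0 d) :=
      eVariationOn.eq_of_eqOn fun t ht => hcLlift t ht
    refine ⟨cL d, ?_, ?_⟩
    · have h1 : edist p (cL d) ≤ eVariationOn cL (Icc 0 d) := by
        have := eVariationOn.edist_le cL (x := 0) (y := d)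
          (left_mem_Icc.mpr hd0) (right_mem_Icc.mpr hd0)
        simpa [hcL0] using this
      have h2 : edist p (cL d) ≤ ENNReal.ofReal d := by
        calc edist p (cL d) ≤ eVariationOn cL (Icc 0 d) := h1
          _ = eVariationOn γ (Icc 0 d) := by rw [← hfcL, heq]
          _ ≤ ENNReal.ofReal d := hγvar
      rw [edist_dist] at h2
      have h3 : dist p (cL d) ≤ d := by
        exact_mod_cast (ENNReal.ofReal_le_ofReal_iff hd0).mp h2
      calc dist (cL d) p = dist p (cL d) := dist_comm _ _
        _ ≤ d := h3
        _ ≤ r := by rw [hd, dist_comm]; exact hy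
    · rw [hcLlift d (right_mem_Icc.mpr hd0), hγd]
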